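/- Let L be a finite relational language, H a hereditary L-property, φ(x̄;ȳ) a quantifier-free L-formula, ℓ ≥ 0, and N ≥ m ≥ 1 integers. There exists K₀ (depending on φ, ℓ, N, m) such that for all K ≥ K₀: if 𝔸 is an (ℓ,|ȳ|)-box of height K with |S_φ^H(𝔸)| = 2^{K^ℓ} and 𝔸′ ⊆ 𝔸 is a sub-box of height m, then there exist subsets Γ₁, …, Γ_{2^{m^ℓ}} of S_φ^H(𝔸) and pairwise distinct types p₁, …, p_{2^{m^ℓ}} in S_φ^H(𝔸′) such that (i) for each 1 ≤ i ≤ 2^{m^ℓ}, every element of Γ_i is an extension of p_i to 𝔸, and (ii) if ℓ > 0 then |Γ_i| ≥ N for each i. -/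

import Mathlib

open FirstOrder Set Function Filter

universe u v w

namespace PaperVC

/-- `𝔸` is an `(ℓ,t)`-box of height `m` in `X`: it is a concatenation product `A₁ ⋯ A_ℓ` of sets
`A_i ⊆ X^{k_i}` (`k_i ≥ 1`, `k₁+⋯+k_ℓ = t`); the fibers of a monotone surjection
`c : Fin t → Fin ℓ` encode the consecutive blocks of coordinates, and each `A_i` has size `m`.
By convention a `(0,t)`-box with `t ≥ 1` is a singleton, and a `(0,0)`-box is the empty set. -/
def IsBoxOfHeight (X : Type*) (ℓ t m : ℕ) (𝔸 : Set (Fin t → X)) : Prop :=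
  (ℓ = 0 ∧ t = 0 ∧ 𝔸 = ∅) ∨
  (ℓ = 0 ∧ 0 < t ∧ ∃ b, 𝔸 = {b}) ∨
  (0 < ℓ ∧ ∃ c : Fin t → Fin ℓ, Monotone c ∧ Function.Surjective c ∧
    ∃ A : (i : Fin ℓ) → Set ({j : Fin t // c j = i} → X),
      (∀ i, (A i).Finite ∧ (A i).ncard = m) ∧
      𝔸 = { b | ∀ i, (fun j : {j : Fin t // c j = i} => b j.1) ∈ A i })

/-- The underlying set of a set of tuples: the set of all coordinates of its tuples. -/
def underlying {X : Type*} {t : ℕ} (𝔹 : Set (Fin t → X)) : Set X :=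
  { x | ∃ b ∈ 𝔹, ∃ j, b j = x }

/-- A family `F` of subsets of `Y` shatters `A ⊆ Y` if every subset of `A` is cut out by a
member of `F`. -/
def Shatters {Y : Type*} (F : Set (Set Y)) (A : Set Y) : Prop :=
  ∀ B ⊆ A, ∃ S ∈ F, S ∩ A = B
/-- `𝔸` is an `(ℓ,t)`-box of height `K` and `𝔸'` is a sub-box of `𝔸` of height `m`
(with respect to a common decomposition): `𝔸 = A₁⋯A_ℓ`, `𝔸' = A₁'⋯A_ℓ'` with `A_i' ⊆ A_i`.
For `ℓ = 0` the only sub-box of a box is the box itself. -/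
def IsSubBoxPair (X : Type*) (ℓ t K m : ℕ) (𝔸 𝔸' : Set (Fin t → X)) : Prop :=
  (ℓ = 0 ∧ 𝔸' = 𝔸 ∧ IsBoxOfHeight X ℓ t K 𝔸) ∨
  (0 < ℓ ∧ ∃ c : Fin t → Fin ℓ, Monotone c ∧ Function.Surjective c ∧
    ∃ A A' : (i : Fin ℓ) → Set ({j : Fin t // c j = i} → X),
      (∀ i, (A i).Finite ∧ (A i).ncard = K) ∧
      (∀ i, (A' i).Finite ∧ (A' i).ncard = m) ∧
      (∀ i, A' i ⊆ A i) ∧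
      𝔸 = { b | ∀ i, (fun j : {j : Fin t // c j = i} => b j.1) ∈ A i } ∧
      𝔸' = { b | ∀ i, (fun j : {j : Fin t // c j = i} => b j.1) ∈ A' i })
/-- The data of a complete equality type in `k` variables over a parameter set contained in `X`:
which pairs of variables are equal, and which variables are equal to which parameters. -/
def EqType (X : Type*) (k : ℕ) :=
  (Fin k → Fin k → Prop) × (Fin k → X → Prop)

/-- The complete equality type over `A ⊆ X` (whose elements are identified with elements of `W`
via `ι`, assumed injective on `A`) realized by the tuple `u : Fin k → W`. -/
def eqTypeOf {X : Type*} {W : Type*} (A : Set X) (ι : X → W) {k : ℕ} (u : Fin k → W) :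
    EqType X k :=
  ⟨fun i j => u i = u j, fun i x => x ∈ A ∧ u i = ι x⟩

/-- `S_k^∅(A)`: the set of complete equality types in `k` variables over `A`; every consistent
such type is realized by a tuple in `X ⊕ Fin k` (with `X` embedded by `Sum.inl`). -/
def EqTypes {X : Type*} (A : Set X) (k : ℕ) : Set (EqType X k) :=
  Set.range fun u : Fin k → (X ⊕ Fin k) => eqTypeOf A Sum.inl u
/-- The structure induced on `α` by pulling back a structure on `β` along a map `f : α → β`
(for relational languages). -/
noncomputable def pullback {L : FirstOrder.Language.{u, v}} [L.IsRelational]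
    {α : Type*} {β : Type*} (f : α → β) (M : L.Structure β) : L.Structure α where
  funMap := fun {_} F _ => isEmptyElim F
  RelMap := fun {_} R x => M.RelMap R (f ∘ x)

/-- A hereditary `L`-property: a family of finite `L`-structures (one set of structures with
universe `Fin n = {1,…,n}` for each `n`), closed under pulling back along arbitrary injections;
this encodes closure under isomorphism and under induced substructures. -/
structure HerProp (L : FirstOrder.Language.{u, v}) [L.IsRelational] where
  sets : ∀ n : ℕ, Set (L.Structure (Fin n))
  hereditary : ∀ {m n : ℕ} (f : Fin m ↪ Fin n) (M : L.Structure (Fin n)),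
    M ∈ sets n → pullback (⇑f) M ∈ sets m

/-- Realization of a first-order formula in a structure given as a term. -/
def realizeIn {L : FirstOrder.Language.{u, v}} {W : Type w} (M : L.Structure W)
    {α : Type*} (φ : L.Formula α) (v : α → W) : Prop :=
  letI := M
  φ.Realize v

/-- The `φ`-type (identified with its positive part, a subset of `𝔸`) of the tuple `a` over the
set of parameter tuples `𝔸` (transferred into `W` via `ι`), in the structure `M`. -/
def phiTypeOf {L : FirstOrder.Language.{u, v}} {W : Type w} (M : L.Structure W) {s t : ℕ}
    (φ : L.Formula (Fin s ⊕ Fin t)) {X : Type*} (𝔸 : Set (Fin t → X)) (ι : X → W)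
    (a : Fin s → W) : Set (Fin t → X) :=
  { b ∈ 𝔸 | realizeIn M φ (Sum.elim a (ι ∘ b)) }

variable {L : FirstOrder.Language.{u, v}} [L.IsRelational]

/-- `S_φ^H(𝔸)`: the set of `φ`-types over `𝔸` (identified with their positive parts)
realized in some member of `H` (the parameters being transferred into the member by an
injection on the underlying set of `𝔸`). -/
def Sphi (H : HerProp L) {s t : ℕ} (φ : L.Formula (Fin s ⊕ Fin t)) {X : Type*}
    (𝔸 : Set (Fin t → X)) : Set (Set (Fin t → X)) :=
  { q | ∃ n : ℕ, ∃ M ∈ H.sets n, ∃ ι : X → Fin n, Set.InjOn ι (underlying 𝔸) ∧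
      ∃ a : Fin s → Fin n, phiTypeOf M φ 𝔸 ι a = q }

/-- `S_{φ,m}^H(𝔸,ρ)`: the set of unions `p₁(x̄₁) ∪ ⋯ ∪ p_m(x̄_m)` (identified with the tuple
`(p₁,…,p_m)` of positive parts of `φ`-types over `𝔸`) realized in some member of `H` by
pairwise distinct `s`-tuples `ā₁,…,ā_m` such that moreover each pair `(ā_i,ā_j)`, `i ≠ j`,
realizes the equality type `ρ` over the underlying set of `𝔸`. -/
def SphiM (H : HerProp L) {s t : ℕ} (φ : L.Formula (Fin s ⊕ Fin t)) (m : ℕ) {X : Type*}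
    (𝔸 : Set (Fin t → X)) (ρ : EqType X (s + s)) : Set (Fin m → Set (Fin t → X)) :=
  { P | ∃ n : ℕ, ∃ M ∈ H.sets n, ∃ ι : X → Fin n, Set.InjOn ι (underlying 𝔸) ∧
      ∃ a : Fin m → Fin s → Fin n, Function.Injective a ∧
        (∀ i, phiTypeOf M φ 𝔸 ι (a i) = P i) ∧
        (∀ i j, i ≠ j → eqTypeOf (underlying 𝔸) ι (Fin.append (a i) (a j)) = ρ) }

/-- The witness predicate for `VC*_ℓ(φ,H) ≥ m`: there are an `(ℓ,t)`-box `𝔸` of height `m`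
and an equality type `ρ ∈ S_{2s}^∅(𝔸)` with `|S_{φ,m}^H(𝔸,ρ)| = 2^(m^(ℓ+1))`. -/
def VCstarWitness (H : HerProp L) (ℓ : ℕ) {s t : ℕ} (φ : L.Formula (Fin s ⊕ Fin t))
    (m : ℕ) : Prop :=
  ∃ 𝔸 : Set (Fin t → ℕ), IsBoxOfHeight ℕ ℓ t m 𝔸 ∧
    ∃ ρ ∈ EqTypes (underlying 𝔸) (s + s),
      Nat.card (SphiM H φ m 𝔸 ρ) = 2 ^ m ^ (ℓ + 1)

/-- `VC*_ℓ(H)`, as an extended natural number: the supremum over quantifier-free partitioned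
formulas `φ(x̄;ȳ)` of `VC*_ℓ(φ,H)`. -/
noncomputable def VCstar (H : HerProp L) (ℓ : ℕ) : ℕ∞ :=
  sSup { N : ℕ∞ | ∃ m : ℕ, N = (m : ℕ∞) ∧ ∃ (s t : ℕ) (φ : L.Formula (Fin s ⊕ Fin t)),
      φ.IsQF ∧ VCstarWitness H ℓ φ m }

section Aux

/-- The natural bijection between a box and the product of its factors. -/
def boxEquiv {X : Type*} {ℓ t : ℕ} (c : Fin t → Fin ℓ)
    (A : (i : Fin ℓ) → Set ({j : Fin t // c j = i} → X)) :
    ↥{ b : Fin t → X | ∀ i, (fun j : {j : Fin t // c j = i} => b j.1) ∈ A i } ≃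
      (∀ i, ↥(A i)) where
  toFun b i := ⟨fun j => b.1 j.1, b.2 i⟩
  invFun f := ⟨fun j => (f (c j)).1 ⟨j, rfl⟩, by
    intro i
    have h : (fun j : {j : Fin t // c j = i} => (f (c j.1)).1 ⟨j.1, rfl⟩) = (f i).1 := by
      funext j
      obtain ⟨v, hv⟩ := j
      subst hv
      rfl
    show (fun j : {j : Fin t // c j = i} => (f (c j.1)).1 ⟨j.1, rfl⟩) ∈ A i
    rw [h]
    exact (f i).2⟩
  left_inv b := Subtype.ext rfl
  right_inv f := by
    funext i
    apply Subtype.ext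
    funext j
    obtain ⟨v, hv⟩ := j
    subst hv
    rfl

lemma box_finite_ncard {X : Type*} {ℓ t K : ℕ} (c : Fin t → Fin ℓ)
    (A : (i : Fin ℓ) → Set ({j : Fin t // c j = i} → X))
    (hA : ∀ i, (A i).Finite ∧ (A i).ncard = K) :
    ({ b : Fin t → X | ∀ i, (fun j : {j : Fin t // c j = i} => b j.1) ∈ A i }).Finite ∧
    ({ b : Fin t → X | ∀ i, (fun j : {j : Fin t // c j = i} => b j.1) ∈ A i }).ncard
      = K ^ ℓ := by
  haveI : ∀ i, Finite ↥(A i) := fun i => (hA i).1.to_subtype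
  have hfin : Finite
      ↥{ b : Fin t → X | ∀ i, (fun j : {j : Fin t // c j = i} => b j.1) ∈ A i } :=
    Finite.of_equiv _ (boxEquiv c A).symm
  refine ⟨Set.finite_coe_iff.mp hfin, ?_⟩
  rw [← Nat.card_coe_set_eq, Nat.card_congr (boxEquiv c A), Nat.card_pi]
  have h : ∀ i : Fin ℓ, Nat.card ↥(A i) = K := fun i => by
    rw [Nat.card_coe_set_eq, (hA i).2]
  simp [h]

lemma nat_card_powerset {α : Type*} {s : Set α} (hs : s.Finite) :
    Nat.card ↥{q : Set α | q ⊆ s} = 2 ^ s.ncard := by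
  show Nat.card ↥(𝒫 s) = 2 ^ s.ncard
  haveI := hs.to_subtype
  haveI : Fintype ↥s := Fintype.ofFinite _
  rw [Nat.card_congr (Equiv.Set.powerset s), Nat.card_eq_fintype_card, Fintype.card_set,
    ← Nat.card_eq_fintype_card, Nat.card_coe_set_eq]

lemma sphi_subset {L : FirstOrder.Language.{u, v}} [L.IsRelational] (H : HerProp L)
    {s t : ℕ} (φ : L.Formula (Fin s ⊕ Fin t)) {X : Type*} {𝔸 : Set (Fin t → X)}
    {q : Set (Fin t → X)} (hq : q ∈ Sphi H φ 𝔸) : q ⊆ 𝔸 := by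
  obtain ⟨n, M, hM, ι, hι, a, rfl⟩ := hq
  intro b hb
  exact hb.1

lemma sphi_restrict {L : FirstOrder.Language.{u, v}} [L.IsRelational] (H : HerProp L)
    {s t : ℕ} (φ : L.Formula (Fin s ⊕ Fin t)) {X : Type*} {𝔸 𝔸' : Set (Fin t → X)}
    (hsub : 𝔸' ⊆ 𝔸) {q : Set (Fin t → X)} (hq : q ∈ Sphi H φ 𝔸) :
    q ∩ 𝔸' ∈ Sphi H φ 𝔸' := by
  obtain ⟨n, M, hM, ι, hι, a, rfl⟩ := hq
  refine ⟨n, M, hM, ι, hι.mono ?_, a, ?_⟩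
  · rintro x ⟨b, hb, j, rfl⟩
    exact ⟨b, hsub hb, j, rfl⟩
  · ext b
    simp only [phiTypeOf, Set.mem_inter_iff, Set.mem_setOf_eq]
    constructor
    · rintro ⟨h1, h2⟩
      exact ⟨⟨hsub h1, h2⟩, h1⟩
    · rintro ⟨⟨_, h2⟩, h1⟩
      exact ⟨h1, h2⟩

end Aux

/-- **Claim 3.3.**  For every quantifier-free `φ(x̄;ȳ)`, `ℓ ≥ 0` and `N ≥ m ≥ 1` there is
`K₀` such that for all `K ≥ K₀`: if `𝔸` is an `(ℓ,|ȳ|)`-box of height `K` with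
`|S_φ^H(𝔸)| = 2^(K^ℓ)` and `𝔸' ⊆ 𝔸` is a sub-box of height `m`, then there are subsets
`Γ₁,…,Γ_{2^(m^ℓ)}` of `S_φ^H(𝔸)` and pairwise distinct `p₁,…,p_{2^(m^ℓ)} ∈ S_φ^H(𝔸')`
such that (i) every element of `Γ_i` is an extension of `p_i` to `𝔸`, and (ii) if `ℓ > 0`
then `|Γ_i| ≥ N` for each `i`. -/
theorem statement12 {L : FirstOrder.Language.{u, v}} [L.IsRelational]
    [∀ n, Finite (L.Relations n)] (H : HerProp L) {s t : ℕ}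
    (φ : L.Formula (Fin s ⊕ Fin t)) (hφ : φ.IsQF) (ℓ N m : ℕ) (hm : 1 ≤ m) (hNm : m ≤ N) :
    ∃ K₀ : ℕ, ∀ K, K₀ ≤ K → ∀ (X : Type w) (𝔸 𝔸' : Set (Fin t → X)),
      IsSubBoxPair X ℓ t K m 𝔸 𝔸' →
      Nat.card (Sphi H φ 𝔸) = 2 ^ K ^ ℓ →
      ∃ (Γ : Fin (2 ^ m ^ ℓ) → Set (Set (Fin t → X)))
        (p : Fin (2 ^ m ^ ℓ) → Set (Fin t → X)),
        Function.Injective p ∧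
        (∀ i, p i ∈ Sphi H φ 𝔸') ∧
        (∀ i, Γ i ⊆ Sphi H φ 𝔸) ∧
        (∀ i, ∀ q ∈ Γ i, q ∩ 𝔸' = p i) ∧
        (0 < ℓ → ∀ i, ∃ e : Fin N → Set (Fin t → X),
          Function.Injective e ∧ ∀ k, e k ∈ Γ i) := by
  refine ⟨N + m ^ ℓ, fun K hK X 𝔸 𝔸' hbox hcard => ?_⟩
  rcases hbox with ⟨hℓ, h𝔸', _⟩ | ⟨hℓ, c, hc, hcsurj, A, A', hA, hA', hsub, h𝔸, h𝔸'⟩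
  · -- case ℓ = 0
    subst hℓ
    subst h𝔸'
    rw [pow_zero, pow_one] at hcard
    haveI : Finite ↥(Sphi H φ 𝔸') := Nat.finite_of_card_ne_zero (by omega)
    have e := Finite.equivFinOfCardEq hcard
    have hpow : 2 ^ m ^ 0 = 2 := by norm_num
    refine ⟨fun i => {(e.symm (Fin.cast hpow i)).1},
      fun i => (e.symm (Fin.cast hpow i)).1, ?_, ?_, ?_, ?_, ?_⟩
    · intro i j h
      have h2 := e.symm.injective (Subtype.val_injective h)
      exact Fin.val_injective (congrArg Fin.val h2)
    · exact fun i => (e.symm (Fin.cast hpow i)).2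
    · exact fun i => Set.singleton_subset_iff.mpr (e.symm (Fin.cast hpow i)).2
    · rintro i q rfl
      exact Set.inter_eq_self_of_subset_left (sphi_subset H φ (e.symm (Fin.cast hpow i)).2)
    · exact fun h => absurd h (lt_irrefl 0)
  · -- case ℓ > 0
    subst h𝔸
    subst h𝔸'
    set 𝔸 : Set (Fin t → X) :=
      { b | ∀ i, (fun j : {j : Fin t // c j = i} => b j.1) ∈ A i } with h𝔸def
    set 𝔸' : Set (Fin t → X) :=
      { b | ∀ i, (fun j : {j : Fin t // c j = i} => b j.1) ∈ A' i } with h𝔸'def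
    obtain ⟨hAfin, hAcard⟩ := box_finite_ncard c A hA
    obtain ⟨hA'fin, hA'card⟩ := box_finite_ncard c A' hA'
    have hsub𝔸 : 𝔸' ⊆ 𝔸 := fun b hb i => hsub i (hb i)
    -- Sphi H φ 𝔸 is the full powerset of 𝔸
    have hSsub : Sphi H φ 𝔸 ⊆ {q | q ⊆ 𝔸} := fun q hq => sphi_subset H φ hq
    have hPfin : ({q | q ⊆ 𝔸} : Set (Set (Fin t → X))).Finite := hAfin.finite_subsets
    have hPcard : ({q | q ⊆ 𝔸} : Set (Set (Fin t → X))).ncard = 2 ^ K ^ ℓ := by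
      rw [← Nat.card_coe_set_eq, nat_card_powerset hAfin, hAcard]
    have hSeq : Sphi H φ 𝔸 = {q | q ⊆ 𝔸} := by
      refine Set.eq_of_subset_of_ncard_le hSsub ?_ hPfin
      rw [hPcard, ← Nat.card_coe_set_eq, hcard]
    -- enumerate the subsets of 𝔸'
    haveI : Finite ↥({q | q ⊆ 𝔸'} : Set (Set (Fin t → X))) :=
      hA'fin.finite_subsets.to_subtype
    have e : ↥({q | q ⊆ 𝔸'} : Set (Set (Fin t → X))) ≃ Fin (2 ^ m ^ ℓ) :=
      Finite.equivFinOfCardEq (by rw [nat_card_powerset hA'fin, hA'card])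
    set p : Fin (2 ^ m ^ ℓ) → Set (Fin t → X) := fun i => (e.symm i).1 with hpdef
    have hp𝔸' : ∀ i, p i ⊆ 𝔸' := fun i => (e.symm i).2
    have hp𝔸 : ∀ i, p i ⊆ 𝔸 := fun i => (hp𝔸' i).trans hsub𝔸
    refine ⟨fun i => {q | q ⊆ 𝔸 ∧ q ∩ 𝔸' = p i}, p, ?_, ?_, ?_, ?_, ?_⟩
    · intro i j h
      exact e.symm.injective (Subtype.val_injective h)
    · intro i
      have hmem : p i ∈ Sphi H φ 𝔸 := by rw [hSeq]; exact hp𝔸 i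
      have := sphi_restrict H φ hsub𝔸 hmem
      rwa [Set.inter_eq_self_of_subset_left (hp𝔸' i)] at this
    · intro i q hq
      rw [hSeq]
      exact hq.1
    · intro i q hq
      exact hq.2
    · intro _ i
      -- the difference 𝔸 \ 𝔸' has at least N elements
      have hdiffcard : N ≤ (𝔸 \ 𝔸').ncard := by
        rw [Set.ncard_diff hsub𝔸 hA'fin, hAcard, hA'card]
        have h1 : K ≤ K ^ ℓ := Nat.le_self_pow hℓ.ne' K
        exact Nat.le_sub_of_add_le (le_trans hK h1)
      haveI : Finite ↥(𝔸 \ 𝔸') := (hAfin.diff : (𝔸 \ 𝔸').Finite).to_subtype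
      have ed : ↥(𝔸 \ 𝔸') ≃ Fin ((𝔸 \ 𝔸').ncard) :=
        Finite.equivFinOfCardEq (Nat.card_coe_set_eq _)
      obtain ⟨f, hfinj⟩ : ∃ f : Fin N → ↥(𝔸 \ 𝔸'), Function.Injective f :=
        ⟨fun k => ed.symm (Fin.castLE hdiffcard k), fun k1 k2 h =>
          Fin.castLE_injective hdiffcard (ed.symm.injective h)⟩
      refine ⟨fun k => p i ∪ {(f k).1}, ?_, ?_⟩
      · intro k1 k2 h
        have h2 : p i ∪ {(f k1).1} = p i ∪ {(f k2).1} := h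
        have hx1 : (f k1).1 ∈ p i ∪ {(f k2).1} := by
          rw [← h2]
          exact Set.mem_union_right _ rfl
        rcases hx1 with hx1 | hx1
        · exact absurd (hp𝔸' i hx1) (f k1).2.2
        · exact hfinj (Subtype.ext hx1)
      · intro k
        constructor
        · intro b hb
          rcases hb with hb | hb
          · exact hp𝔸 i hb
          · rw [Set.mem_singleton_iff] at hb
            exact hb ▸ (f k).2.1
        · rw [Set.union_inter_distrib_right,
            Set.inter_eq_self_of_subset_left (hp𝔸' i),
            Set.singleton_inter_eq_empty.mpr (f k).2.2, Set.union_empty]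


end PaperVC
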